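/- Let 1 ≤ p ≤ ∞, q the conjugate exponent, Y ∈ L^q_d and v ∈ M, and define R : L^p_d → 𝒫(M) by R(X) = F^M_{(Y,v)}[−X] = {u ∈ M : E[(−X)ᵀY] ≤ vᵀu}. Then R is L^p_d(K_T)-monotone (i.e., K_T-compatible) if and only if Y ∈ L^q_d(K_T^+). -/

import Mathlib

open MeasureTheory Set Filter Topology Pointwise ENNReal

noncomputable section

/-- `ℝ^d` -/
abbrev Vec (d : ℕ) := Fin d → ℝ

/-- the Euclidean dot (bilinear) pairing `vᵀu` on `ℝ^d` -/
def dotp {d : ℕ} (v u : Vec d) : ℝ := ∑ i, v i * u i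

/-- the nonnegative orthant `ℝ^d_+` -/
def posOrthant (d : ℕ) : Set (Vec d) := {x | ∀ i, 0 ≤ x i}

/-- the (positive) dual cone of a set `C ⊆ ℝ^d` -/
def posDual {d : ℕ} (C : Set (Vec d)) : Set (Vec d) := {v | ∀ x ∈ C, 0 ≤ dotp v x}

/-- the orthogonal complement `M^⊥` of a subspace -/
def perpSet {d : ℕ} (M : Submodule ℝ (Vec d)) : Set (Vec d) := {v | ∀ u ∈ M, dotp v u = 0}

/-- the half space `G(w) = {x : wᵀx ≥ 0}` -/
def Gset {d : ℕ} (w : Vec d) : Set (Vec d) := {x | 0 ≤ dotp w x}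

/-- a closed convex cone `K` with `ℝ^d_+ ⊆ K ≠ ℝ^d` (a solvency cone) -/
def IsSolvencyCone {d : ℕ} (K : Set (Vec d)) : Prop :=
  IsClosed K ∧ Convex ℝ K ∧ (∀ t : ℝ, 0 < t → ∀ x ∈ K, t • x ∈ K) ∧
    posOrthant d ⊆ K ∧ K ≠ univ

variable {Ω : Type*} [MeasurableSpace Ω]

/-- the constant (deterministic) random vector `u𝟙 ∈ L^p_d` -/
def constLp (μ : Measure Ω) [IsFiniteMeasure μ] (d : ℕ) (p : ℝ≥0∞) (u : Vec d) :
    Lp (Vec d) p μ := MeasureTheory.Lp.const p μ u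

/-- the cone `(L^p_d)_+` of a.s. componentwise nonnegative elements of `L^p_d` -/
def LpNonneg (μ : Measure Ω) [IsFiniteMeasure μ] (d : ℕ) (p : ℝ≥0∞) :
    Set (Lp (Vec d) p μ) := {X | ∀ᵐ ω ∂μ, ∀ i, 0 ≤ X ω i}

/-- an acceptance set in `L^p_d` -/
def IsAcceptanceSet {μ : Measure Ω} [IsFiniteMeasure μ] {d : ℕ} {p : ℝ≥0∞}
    (A : Set (Lp (Vec d) p μ)) : Prop :=
  (∃ x : Vec d, constLp μ d p x ∈ A) ∧ (∃ x : Vec d, constLp μ d p x ∉ A) ∧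
    ∀ X ∈ A, ∀ Y ∈ LpNonneg μ d p, X + Y ∈ A

/-- the function `R_A` induced by a set `A ⊆ L^p_d` -/
def RA {μ : Measure Ω} [IsFiniteMeasure μ] {d : ℕ} {p : ℝ≥0∞} (M : Submodule ℝ (Vec d))
    (A : Set (Lp (Vec d) p μ)) (X : Lp (Vec d) p μ) : Set (Vec d) :=
  {u | u ∈ M ∧ X + constLp μ d p u ∈ A}

/-- the acceptance set `A_R` induced by a function `R` -/
def AR {μ : Measure Ω} {d : ℕ} {p : ℝ≥0∞} (R : Lp (Vec d) p μ → Set (Vec d)) :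
    Set (Lp (Vec d) p μ) := {X | 0 ∈ R X}

/-- `R` is translative in `M`: `R(X + u𝟙) = R(X) − u` for `u ∈ M` -/
def MTranslative {μ : Measure Ω} [IsFiniteMeasure μ] {d : ℕ} {p : ℝ≥0∞}
    (M : Submodule ℝ (Vec d)) (R : Lp (Vec d) p μ → Set (Vec d)) : Prop :=
  ∀ X : Lp (Vec d) p μ, ∀ u ∈ M, R (X + constLp μ d p u) = (fun w => w - u) '' R X

/-- `R` is `B`-monotone: `X² − X¹ ∈ B ⟹ R(X²) ⊇ R(X¹)` -/
def BMonotone {μ : Measure Ω} {d : ℕ} {p : ℝ≥0∞} (B : Set (Lp (Vec d) p μ))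
    (R : Lp (Vec d) p μ → Set (Vec d)) : Prop :=
  ∀ X₁ X₂ : Lp (Vec d) p μ, X₂ - X₁ ∈ B → R X₁ ⊆ R X₂

/-- a (set-valued) risk measure: an `M`-translative, `(L^p_d)_+`-monotone function
mapping into the power set of `M` -/
def IsRiskMeasure {μ : Measure Ω} [IsFiniteMeasure μ] {d : ℕ} {p : ℝ≥0∞}
    (M : Submodule ℝ (Vec d)) (R : Lp (Vec d) p μ → Set (Vec d)) : Prop :=
  (∀ X, R X ⊆ (M : Set (Vec d))) ∧ MTranslative M R ∧ BMonotone (LpNonneg μ d p) R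

/-- `R` is finite at zero -/
def FiniteAtZero {μ : Measure Ω} {d : ℕ} {p : ℝ≥0∞} (M : Submodule ℝ (Vec d))
    (R : Lp (Vec d) p μ → Set (Vec d)) : Prop :=
  R 0 ≠ ∅ ∧ R 0 ≠ (M : Set (Vec d))

/-- measurability of a set-valued map -/
def MeasurableSetValued {d : ℕ} (K : Ω → Set (Vec d)) : Prop :=
  ∀ B : Set (Vec d), IsOpen B → MeasurableSet {ω | (K ω ∩ B).Nonempty}

/-- `L^p_d(K) = {X ∈ L^p_d : X(ω) ∈ K(ω)` a.s.`}` -/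
def LpSection (μ : Measure Ω) [IsFiniteMeasure μ] (d : ℕ) (p : ℝ≥0∞)
    (K : Ω → Set (Vec d)) : Set (Lp (Vec d) p μ) := {X | ∀ᵐ ω ∂μ, X ω ∈ K ω}


/-- the market model hypotheses on `K_T`: measurable set-valued map with solvency-cone
values -/
def IsMarketMapKT {d : ℕ} (KT : Ω → Set (Vec d)) : Prop :=
  MeasurableSetValued KT ∧ ∀ ω, IsSolvencyCone (KT ω)

/-- `K_T`-compatibility of an acceptance set: `A + L^p_d(K_T) ⊆ A` -/
def KTcompatSet {μ : Measure Ω} [IsFiniteMeasure μ] {d : ℕ} {p : ℝ≥0∞}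
    (KT : Ω → Set (Vec d)) (A : Set (Lp (Vec d) p μ)) : Prop :=
  ∀ X ∈ A, ∀ Y ∈ LpSection μ d p KT, X + Y ∈ A

/-- `K_I`-compatibility of an acceptance set: `A + K_I^M𝟙 ⊆ A` -/
def KIcompatSet {μ : Measure Ω} [IsFiniteMeasure μ] {d : ℕ} {p : ℝ≥0∞}
    (M : Submodule ℝ (Vec d)) (KI : Set (Vec d)) (A : Set (Lp (Vec d) p μ)) : Prop :=
  ∀ X ∈ A, ∀ k ∈ KI ∩ (M : Set (Vec d)), X + constLp μ d p k ∈ A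

/-- `K_T`-compatibility of a risk measure: `L^p_d(K_T)`-monotonicity -/
def KTcompatR {μ : Measure Ω} [IsFiniteMeasure μ] {d : ℕ} {p : ℝ≥0∞}
    (KT : Ω → Set (Vec d)) (R : Lp (Vec d) p μ → Set (Vec d)) : Prop :=
  BMonotone (LpSection μ d p KT) R

/-- `K_I`-compatibility of a risk measure: its values `D` satisfy `D = D + K_I^M` -/
def KIcompatR {μ : Measure Ω} {d : ℕ} {p : ℝ≥0∞}
    (M : Submodule ℝ (Vec d)) (KI : Set (Vec d)) (R : Lp (Vec d) p μ → Set (Vec d)) :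
    Prop :=
  ∀ X, R X + (KI ∩ (M : Set (Vec d))) = R X

/-- the bilinear pairing `(X,Y) ↦ E[XᵀY]` between `L^p_d` and `L^q_d` -/
def pairLp {μ : Measure Ω} {d : ℕ} {p q : ℝ≥0∞} (X : Lp (Vec d) p μ)
    (Y : Lp (Vec d) q μ) : ℝ := ∫ ω, dotp (X ω) (Y ω) ∂μ

/-- the componentwise expectation `E[Y] ∈ ℝ^d` -/
def meanVec {d : ℕ} {r : ℝ≥0∞} (μ : Measure Ω) (Y : Lp (Vec d) r μ) : Vec d :=
  fun i => ∫ ω, Y ω i ∂μ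

/-- the set-valued function `F^M_{(Y,v)}[X] = {u ∈ M : E[XᵀY] ≤ vᵀu}` -/
def FM {μ : Measure Ω} {d : ℕ} {p q : ℝ≥0∞} (M : Submodule ℝ (Vec d))
    (Y : Lp (Vec d) q μ) (v : Vec d) (X : Lp (Vec d) p μ) : Set (Vec d) :=
  {u | u ∈ M ∧ pairLp X Y ≤ dotp v u}

section FMaux

variable {d : ℕ}

lemma dotp_comm' (v u : Vec d) : dotp v u = dotp u v := by
  simp [dotp, mul_comm]

lemma dotp_zero_left (u : Vec d) : dotp 0 u = 0 := by simp [dotp]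

lemma dotp_zero_right (u : Vec d) : dotp u 0 = 0 := by simp [dotp]

lemma dotp_neg_left (v u : Vec d) : dotp (-v) u = -dotp v u := by
  simp [dotp, ← Finset.sum_neg_distrib]

lemma dotp_sub_left (x y w : Vec d) : dotp (x - y) w = dotp x w - dotp y w := by
  simp [dotp, sub_mul, Finset.sum_sub_distrib]

variable {Ω : Type*} [MeasurableSpace Ω] {μ : Measure Ω}

/-- Hölder's inequality: the pointwise pairing of an `L^p` and an `L^q` function
is integrable when `1/p + 1/q = 1`. -/
lemma integrable_dotp_holder {p q : ℝ≥0∞} (hpq : 1 / p + 1 / q = 1)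
    [IsFiniteMeasure μ] (X : Lp (Vec d) p μ) (Y : Lp (Vec d) q μ) :
    Integrable (fun ω => dotp (X ω) (Y ω)) μ := by
  have hcomp : ∀ i : Fin d, Integrable (fun ω => X ω i * Y ω i) μ := by
    intro i
    have hX : MemLp (fun ω => X ω i) p μ :=
      (ContinuousLinearMap.proj (R := ℝ) (φ := fun _ : Fin d => ℝ) i).comp_memLp'
        (Lp.memLp X)
    have hY : MemLp (fun ω => Y ω i) q μ :=
      (ContinuousLinearMap.proj (R := ℝ) (φ := fun _ : Fin d => ℝ) i).comp_memLp'
        (Lp.memLp Y)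
    have hsmul : MemLp ((fun ω => X ω i) • (fun ω => Y ω i)) 1 μ :=
      hY.smul hX (hpqr := ⟨by simpa using hpq⟩)
    exact memLp_one_iff_integrable.mp hsmul
  have : (fun ω => dotp (X ω) (Y ω)) = fun ω => ∑ i, X ω i * Y ω i := by
    funext ω; rfl
  rw [this]
  exact integrable_finset_sum _ fun i _ => hcomp i

lemma pairLp_neg {p q : ℝ≥0∞} (X : Lp (Vec d) p μ) (Y : Lp (Vec d) q μ) :
    pairLp (-X) Y = -pairLp X Y := by
  unfold pairLp
  rw [← integral_neg]
  apply integral_congr_ae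
  filter_upwards [Lp.coeFn_neg X] with ω hω
  rw [hω]
  exact dotp_neg_left _ _

/-- membership of a fixed point in the values of a measurable closed-valued map is
measurable -/
lemma measurableSet_mem_setValued {KT : Ω → Set (Vec d)}
    (hmeas : MeasurableSetValued KT) (hcl : ∀ ω, IsClosed (KT ω)) (r : Vec d) :
    MeasurableSet {ω | r ∈ KT ω} := by
  have key : {ω | r ∈ KT ω} =
      ⋂ n : ℕ, {ω | (KT ω ∩ Metric.ball r (1 / (n + 1))).Nonempty} := by
    ext ω
    simp only [Set.mem_iInter, Set.mem_setOf_eq]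
    constructor
    · intro h n
      exact ⟨r, h, Metric.mem_ball_self (by positivity)⟩
    · intro h
      rw [← (hcl ω).closure_eq, Metric.mem_closure_iff]
      intro ε hε
      obtain ⟨n, hn⟩ := exists_nat_one_div_lt hε
      obtain ⟨x, hx, hxb⟩ := h n
      exact ⟨x, hx, by rw [dist_comm]; exact lt_trans (Metric.mem_ball.mp hxb) hn⟩
  rw [key]
  exact MeasurableSet.iInter fun n => hmeas _ Metric.isOpen_ball

/-- a solvency cone is closed under adding elements of the nonnegative orthant -/
lemma IsSolvencyCone.add_orthant {K : Set (Vec d)} (hK : IsSolvencyCone K)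
    {x y : Vec d} (hx : x ∈ K) (hy : y ∈ posOrthant d) : x + y ∈ K := by
  obtain ⟨-, hconv, hcone, horth, -⟩ := hK
  have hmid : (1 / 2 : ℝ) • x + (1 / 2 : ℝ) • y ∈ K :=
    hconv hx (horth hy) (by norm_num) (by norm_num) (by norm_num)
  have h2 : (2 : ℝ) • ((1 / 2 : ℝ) • x + (1 / 2 : ℝ) • y) = x + y := by
    rw [smul_add, smul_smul, smul_smul]; norm_num
  have := hcone 2 (by norm_num) _ hmid
  rwa [h2] at this

lemma zero_mem_solvency {K : Set (Vec d)} (hK : IsSolvencyCone K) : (0 : Vec d) ∈ K :=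
  hK.2.2.2.1 fun _ => le_refl 0

end FMaux

/-- `R(X) = F^M_{(Y,v)}[−X]` is `L^p_d(K_T)`-monotone (i.e.
`K_T`-compatible) iff `Y ∈ L^q_d(K_T^+)`. -/
theorem FM_KT_compatible_iff
    (μ : Measure Ω) [IsProbabilityMeasure μ] (d : ℕ) (hd : 1 ≤ d)
    (p q : ℝ≥0∞) (hp : 1 ≤ p) (hpq : 1 / p + 1 / q = 1)
    (M : Submodule ℝ (Vec d)) (KT : Ω → Set (Vec d)) (hKT : IsMarketMapKT KT)
    (Y : Lp (Vec d) q μ) (v : Vec d) (hv : v ∈ M) :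
    BMonotone (LpSection μ d p KT) (fun X : Lp (Vec d) p μ => FM M Y v (-X)) ↔
      (∀ᵐ ω ∂μ, Y ω ∈ posDual (KT ω)) := by
  constructor
  · -- If `R` is `L^p_d(K_T)`-monotone then `Y ∈ L^q_d(K_T^+)`.
    intro hmono
    -- Step 1: the pairing with every `Z ∈ L^p_d(K_T)` is nonnegative.
    have key : ∀ Z ∈ LpSection μ d p KT, 0 ≤ pairLp Z Y := by
      intro Z hZ
      have h00 : (0 : Vec d) ∈ FM M Y v (-(0 : Lp (Vec d) p μ)) := by
        refine ⟨M.zero_mem, ?_⟩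
        have hz0 : pairLp (0 : Lp (Vec d) p μ) Y = 0 := by
          unfold pairLp
          rw [← integral_zero Ω ℝ (μ := μ)]
          apply integral_congr_ae
          filter_upwards [Lp.coeFn_zero (E := Vec d) (p := p) (μ := μ)] with ω hω
          rw [hω]
          exact dotp_zero_left _
        rw [pairLp_neg, hz0, neg_zero, dotp_zero_right]
      have hsub : Z - 0 ∈ LpSection μ d p KT := by simpa using hZ
      obtain ⟨-, hle⟩ := hmono 0 Z hsub h00
      rw [pairLp_neg, dotp_zero_right] at hle
      linarith
    -- Step 2: for every fixed vector `r`, the "bad" set is null.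
    have hYm : StronglyMeasurable (Y : Ω → Vec d) := Lp.stronglyMeasurable Y
    have hnull : ∀ r : Vec d, μ {ω | r ∈ KT ω ∧ dotp r (Y ω) < 0} = 0 := by
      intro r
      set A := {ω | r ∈ KT ω ∧ dotp r (Y ω) < 0} with hA_def
      have hgm : Measurable fun ω => dotp r (Y ω) := by
        have hc : Continuous fun y : Vec d => dotp r y :=
          continuous_finset_sum _ fun i _ => continuous_const.mul (continuous_apply i)
        exact hc.measurable.comp hYm.measurable
      have hA : MeasurableSet A :=
        (measurableSet_mem_setValued hKT.1 (fun ω => (hKT.2 ω).1) r).inter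
          (measurableSet_lt hgm measurable_const)
      have hfmem : MemLp (A.indicator fun _ => r) p μ := (memLp_const r).indicator hA
      set Z := hfmem.toLp _ with hZ_def
      have hZsec : Z ∈ LpSection μ d p KT := by
        filter_upwards [hfmem.coeFn_toLp] with ω hω
        rw [hω]
        by_cases h : ω ∈ A
        · rw [Set.indicator_of_mem h]; exact h.1
        · rw [Set.indicator_of_notMem h]; exact zero_mem_solvency (hKT.2 ω)
      have hint : Integrable (fun ω => dotp r (Y ω)) μ := by
        refine (integrable_dotp_holder hpq (constLp μ d p r) Y).congr ?_
        filter_upwards [Lp.coeFn_const (p := p) (μ := μ) r] with ω hω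
        rw [show (constLp μ d p r : Ω → Vec d) ω = r from hω]
      have hgind : Integrable (A.indicator fun ω => dotp r (Y ω)) μ := hint.indicator hA
      have hpair : pairLp Z Y = ∫ ω, A.indicator (fun ω' => dotp r (Y ω')) ω ∂μ := by
        apply integral_congr_ae
        filter_upwards [hfmem.coeFn_toLp] with ω hω
        rw [hω]
        by_cases h : ω ∈ A
        · rw [Set.indicator_of_mem h, Set.indicator_of_mem h]
        · rw [Set.indicator_of_notMem h, Set.indicator_of_notMem h]
          exact dotp_zero_left _
      have hle0 : (A.indicator fun ω => dotp r (Y ω)) ≤ 0 := by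
        intro ω
        by_cases h : ω ∈ A
        · rw [Set.indicator_of_mem h]; exact le_of_lt h.2
        · rw [Set.indicator_of_notMem h]; exact le_rfl
      have hzero : ∫ ω, A.indicator (fun ω' => dotp r (Y ω')) ω ∂μ = 0 :=
        le_antisymm (integral_nonpos hle0) (hpair ▸ key Z hZsec)
      have hneg : (fun ω => -(A.indicator (fun ω' => dotp r (Y ω')) ω)) =ᵐ[μ]
          (0 : Ω → ℝ) := by
        refine (integral_eq_zero_iff_of_nonneg (fun ω => neg_nonneg.mpr (hle0 ω))
          hgind.neg).mp ?_
        rw [integral_neg, hzero, neg_zero]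
      rw [Filter.EventuallyEq, ae_iff] at hneg
      refine measure_mono_null ?_ hneg
      intro ω hω
      simp only [Set.mem_setOf_eq, Pi.zero_apply, neg_eq_zero]
      rw [Set.indicator_of_mem hω]
      exact ne_of_lt hω.2
    -- Step 3: combine over a countable dense set.
    obtain ⟨S, hSc, hSd⟩ := TopologicalSpace.exists_countable_dense (Vec d)
    have hae : ∀ᵐ ω ∂μ, ∀ r ∈ S, r ∈ KT ω → 0 ≤ dotp r (Y ω) := by
      rw [ae_ball_iff hSc]
      intro r _
      rw [ae_iff]
      refine measure_mono_null ?_ (hnull r)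
      intro ω hω
      rw [Set.mem_setOf_eq] at hω
      push_neg at hω
      exact ⟨hω.1, hω.2⟩
    -- Step 4: pointwise density argument.
    filter_upwards [hae] with ω hω
    intro x hx
    rw [dotp_comm']
    set w := Y ω with hw
    set C := ∑ i, |w i| with hC
    have hC0 : 0 ≤ C := Finset.sum_nonneg fun i _ => abs_nonneg _
    have hkey : ∀ ε : ℝ, 0 < ε → -ε ≤ dotp x w := by
      intro ε hε
      set δ := ε / (2 * (C + 1)) with hδdef
      have hδ : 0 < δ := by positivity
      set c := x + δ • (fun _ : Fin d => (1 : ℝ)) with hcdef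
      obtain ⟨r, hrb, hrS⟩ := Metric.dense_iff.mp hSd c δ hδ
      have hdist : ∀ i, |r i - c i| < δ := by
        intro i
        calc |r i - c i| = dist (r i) (c i) := (Real.dist_eq _ _).symm
          _ ≤ dist r c := dist_le_pi_dist r c i
          _ < δ := Metric.mem_ball.mp hrb
      have hci : ∀ i, c i = x i + δ := by
        intro i; simp [hcdef]
      have hbnd : ∀ i, 0 < r i - x i ∧ r i - x i < 2 * δ := by
        intro i
        have h2 := abs_lt.mp (hdist i)
        rw [hci i] at h2
        exact ⟨by linarith [h2.1], by linarith [h2.2]⟩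
      have hrK : r ∈ KT ω := by
        have hmem : (r - x) ∈ posOrthant d := fun i => le_of_lt (hbnd i).1
        have := (hKT.2 ω).add_orthant hx hmem
        simpa using this
      have h0r : 0 ≤ dotp r w := hω r hrS hrK
      have hdotp_eq : dotp (r - x) w = ∑ i, (r i - x i) * w i := rfl
      have hdiff : |dotp r w - dotp x w| ≤ 2 * δ * C := by
        rw [← dotp_sub_left, hdotp_eq]
        calc |∑ i, (r i - x i) * w i| ≤ ∑ i, |(r i - x i) * w i| :=
              Finset.abs_sum_le_sum_abs _ _
          _ ≤ ∑ i, (2 * δ) * |w i| := by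
              refine Finset.sum_le_sum fun i _ => ?_
              rw [abs_mul]
              refine mul_le_mul_of_nonneg_right ?_ (abs_nonneg _)
              rw [abs_of_pos (hbnd i).1]
              exact le_of_lt (hbnd i).2
          _ = 2 * δ * C := by rw [← Finset.mul_sum]
      have hmul : 2 * δ * (C + 1) = ε := by
        rw [hδdef]; field_simp
      have h2δC : 2 * δ * C ≤ ε := by nlinarith [hδ.le]
      linarith [(abs_le.mp hdiff).2]
    by_contra hlt
    push_neg at hlt
    have := hkey (-(dotp x w) / 2) (by linarith)
    linarith
  · -- If `Y ∈ L^q_d(K_T^+)` then `R` is `L^p_d(K_T)`-monotone.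
    intro hY X₁ X₂ hZ u hu
    obtain ⟨huM, hup⟩ := hu
    refine ⟨huM, ?_⟩
    have h1 : pairLp X₁ Y ≤ pairLp X₂ Y := by
      refine integral_mono_ae (integrable_dotp_holder hpq X₁ Y)
        (integrable_dotp_holder hpq X₂ Y) ?_
      filter_upwards [hY, hZ, Lp.coeFn_sub X₂ X₁] with ω h1 h2 h3
      rw [h3] at h2
      have h4 := h1 _ h2
      rw [dotp_comm', Pi.sub_apply, dotp_sub_left] at h4
      linarith
    rw [pairLp_neg] at hup ⊢
    linarith
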